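/- For every γ with 0 < γ < 1/L, the set of global minimizers of φ coincides with the set of global minimizers of φ_γ, i.e., argmin_{u ∈ E} φ(u) = argmin_{u ∈ E} φ_γ(u) (Proposition 1(iv), argmin part). -/

import Mathlib

open scoped RealInnerProductSpace
open Filter Topology Asymptotics

/-- Moreau envelope `g^γ(v) = inf_w { g(w) + (1/(2γ))‖w − v‖² }` of an
extended-real-valued function `g`. -/
noncomputable def moreauEnv {E : Type*} [NormedAddCommGroup E] [InnerProductSpace ℝ E]
    (g : E → EReal) (γ : ℝ) (v : E) : EReal :=
  ⨅ w : E, g w + (((1 / (2 * γ)) * ‖w - v‖ ^ 2 : ℝ) : EReal)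

/-- The (set-valued) proximal mapping
`prox_{γg}(v) = argmin_w { g(w) + (1/(2γ))‖w − v‖² }`. -/
def proxSet {E : Type*} [NormedAddCommGroup E] [InnerProductSpace ℝ E]
    (g : E → EReal) (γ : ℝ) (v : E) : Set E :=
  {w | ∀ w' : E, g w + (((1 / (2 * γ)) * ‖w - v‖ ^ 2 : ℝ) : EReal)
      ≤ g w' + (((1 / (2 * γ)) * ‖w' - v‖ ^ 2 : ℝ) : EReal)}

/-- The forward–backward envelope
`φ_γ(u) = ℓ(u) − (γ/2)‖∇ℓ(u)‖² + g^γ(u − γ∇ℓ(u))`, where `l'` plays the role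
of the gradient `∇ℓ`. -/
noncomputable def fbe {E : Type*} [NormedAddCommGroup E] [InnerProductSpace ℝ E]
    (l : E → ℝ) (l' : E → E) (g : E → EReal) (γ : ℝ) (u : E) : EReal :=
  ((l u - (γ / 2) * ‖l' u‖ ^ 2 : ℝ) : EReal) + moreauEnv g γ (u - γ • l' u)

/-- auxiliary quadratic model -/
noncomputable def qaux {E : Type*} [NormedAddCommGroup E] [InnerProductSpace ℝ E]
    (l : E → ℝ) (l' : E → E) (γ : ℝ) (u w : E) : ℝ :=
  l u + ⟪l' u, w - u⟫ + (1 / (2 * γ)) * ‖w - u‖ ^ 2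

lemma qaux_self {E : Type*} [NormedAddCommGroup E] [InnerProductSpace ℝ E]
    (l : E → ℝ) (l' : E → E) (γ : ℝ) (u : E) : qaux l l' γ u u = l u := by
  simp [qaux]

lemma descent_lemma {E : Type*} [NormedAddCommGroup E] [InnerProductSpace ℝ E] [CompleteSpace E]
    (l : E → ℝ) (l' : E → E) (L : ℝ)
    (hgrad : ∀ x : E, HasGradientAt l (l' x) x)
    (hlip : ∀ x y : E, ‖l' x - l' y‖ ≤ L * ‖x - y‖)
    (u w : E) : l w ≤ l u + ⟪l' u, w - u⟫ + L / 2 * ‖w - u‖ ^ 2 := by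
  set d := w - u with hd
  set c1 : ℝ := ⟪l' u, d⟫ with hc1
  set k : ℝ := L / 2 * ‖d‖ ^ 2 with hk
  set H : ℝ → ℝ := fun t => l (u + t • d) - t * c1 - k * t ^ 2 with hH
  have hline : ∀ t : ℝ, HasDerivAt (fun t : ℝ => u + t • d) d t := by
    intro t
    simpa using ((hasDerivAt_id t).smul_const d).const_add u
  have hderiv : ∀ t : ℝ, HasDerivAt H (⟪l' (u + t • d), d⟫ - c1 - k * (2 * t)) t := by
    intro t
    have h1 : HasDerivAt (fun t : ℝ => l (u + t • d)) (⟪l' (u + t • d), d⟫) t := by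
      have := (hgrad (u + t • d)).hasFDerivAt.comp_hasDerivAt t (hline t)
      simp [InnerProductSpace.toDual_apply_apply] at this
      exact this
    have h2 : HasDerivAt (fun t : ℝ => t * c1) c1 t := by
      simpa using (hasDerivAt_id t).mul_const c1
    have h3 : HasDerivAt (fun t : ℝ => k * t ^ 2) (k * (2 * t)) t := by
      simpa [mul_comm] using ((hasDerivAt_pow 2 t).const_mul k)
    exact (h1.sub h2).sub h3
  have hmono : AntitoneOn H (Set.Icc 0 1) := by
    apply antitoneOn_of_deriv_nonpos (convex_Icc 0 1)
    · exact fun t _ => ((hderiv t).continuousAt).continuousWithinAt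
    · exact fun t _ => ((hderiv t).differentiableAt).differentiableWithinAt
    · intro t ht
      rw [interior_Icc] at ht
      rw [(hderiv t).deriv]
      have hinner : ⟪l' (u + t • d), d⟫ - c1 = ⟪l' (u + t • d) - l' u, d⟫ := by
        rw [inner_sub_left]
      have hb : ⟪l' (u + t • d) - l' u, d⟫ ≤ ‖l' (u + t • d) - l' u‖ * ‖d‖ :=
        real_inner_le_norm _ _
      have hc : ‖l' (u + t • d) - l' u‖ ≤ L * (t * ‖d‖) := by
        have := hlip (u + t • d) u
        simpa [norm_smul, abs_of_pos ht.1, mul_assoc] using this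
      have hdn : (0 : ℝ) ≤ ‖d‖ := norm_nonneg _
      nlinarith [sq_nonneg ‖d‖, ht.1.le]
  have h01 : H 1 ≤ H 0 :=
    hmono (by constructor <;> norm_num) (by constructor <;> norm_num) zero_le_one
  have e0 : H 0 = l u := by simp [hH]
  have e1 : H 1 = l w - c1 - k := by simp [hH, hd]
  rw [e0, e1] at h01
  simp only [hc1, hk] at h01 ⊢
  linarith

lemma coe_add_iInf_aux {ι : Type*} (r : ℝ) (f : ι → EReal) :
    (r : EReal) + ⨅ i, f i = ⨅ i, ((r : EReal) + f i) := by
  refine le_antisymm (le_iInf fun i => add_le_add le_rfl (iInf_le f i)) ?_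
  have h : (⨅ i, ((r : EReal) + f i)) - r ≤ ⨅ i, f i := by
    refine le_iInf fun i => ?_
    have h1 : (⨅ i, ((r : EReal) + f i)) ≤ (r : EReal) + f i := iInf_le _ i
    calc (⨅ i, ((r : EReal) + f i)) - r ≤ ((r : EReal) + f i) - r := add_le_add h1 le_rfl
      _ = f i := by rw [add_comm]; exact EReal.add_sub_cancel_right
  calc (⨅ i, ((r : EReal) + f i)) = (⨅ i, ((r : EReal) + f i)) - r + r :=
        EReal.sub_add_cancel.symm
    _ ≤ (⨅ i, f i) + r := add_le_add h le_rfl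
    _ = (r : EReal) + ⨅ i, f i := add_comm _ _

lemma fbe_eq_iInf {E : Type*} [NormedAddCommGroup E] [InnerProductSpace ℝ E]
    (l : E → ℝ) (l' : E → E) (g : E → EReal) {γ : ℝ} (hγ : 0 < γ) (u : E) :
    fbe l l' g γ u = ⨅ w : E, ((qaux l l' γ u w : ℝ) : EReal) + g w := by
  rw [fbe, moreauEnv, coe_add_iInf_aux]
  refine iInf_congr fun w => ?_
  have hq : l u - γ / 2 * ‖l' u‖ ^ 2 + (1 / (2 * γ)) * ‖w - (u - γ • l' u)‖ ^ 2
      = qaux l l' γ u w := by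
    rw [qaux]
    have he : w - (u - γ • l' u) = (w - u) + γ • l' u := by abel
    rw [he, norm_add_sq_real, real_inner_smul_right, norm_smul, Real.norm_eq_abs,
      abs_of_pos hγ, mul_pow, real_inner_comm]
    field_simp
    ring
  calc ((l u - γ / 2 * ‖l' u‖ ^ 2 : ℝ) : EReal)
        + (g w + ((1 / (2 * γ)) * ‖w - (u - γ • l' u)‖ ^ 2 : ℝ))
      = ((l u - γ / 2 * ‖l' u‖ ^ 2 : ℝ) : EReal)
        + ((1 / (2 * γ)) * ‖w - (u - γ • l' u)‖ ^ 2 : ℝ) + g w := by abel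
    _ = _ := by rw [← EReal.coe_add, hq]

/-- for `0 < γ < 1/L`, `argmin φ = argmin φ_γ`. -/
theorem argmin_cost_eq_argmin_fbe
    {E : Type*} [NormedAddCommGroup E] [InnerProductSpace ℝ E] [FiniteDimensional ℝ E]
    (l : E → ℝ) (l' : E → E) (g : E → EReal) (L γ : ℝ)
    (hL : 0 < L) (hγ : 0 < γ)
    (hgrad : ∀ x : E, HasGradientAt l (l' x) x)
    (hlip : ∀ x y : E, ‖l' x - l' y‖ ≤ L * ‖x - y‖)
    (hproper : ∃ x : E, g x ≠ ⊤) (hbot : ∀ x : E, g x ≠ ⊥)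
    (hlsc : LowerSemicontinuous g)
    (hbdd : ∃ m : ℝ, ∀ x : E, (m : EReal) ≤ g x)
    (hγL : γ < 1 / L) :
    {u : E | ∀ v : E, (l u : EReal) + g u ≤ (l v : EReal) + g v} =
      {u : E | ∀ v : E, fbe l l' g γ u ≤ fbe l l' g γ v} := by
  have hγL' : γ * L < 1 := (lt_div_iff₀ hL).1 hγL
  set c : ℝ := 1 / (2 * γ) - L / 2 with hcdef
  have hc : 0 < c := by
    have e : c = (1 - γ * L) / (2 * γ) := by rw [hcdef]; field_simp
    rw [e]
    exact div_pos (by linarith) (by linarith)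
  have hdesc := descent_lemma l l' L hgrad hlip
  have hql : ∀ u w : E, l w + c * ‖w - u‖ ^ 2 ≤ qaux l l' γ u w := by
    intro u w
    have h1 := hdesc u w
    rw [qaux]
    have hc' : 1 / (2 * γ) = L / 2 + c := by rw [hcdef]; ring
    rw [hc']
    nlinarith [sq_nonneg ‖w - u‖]
  have hFle : ∀ u : E, fbe l l' g γ u ≤ (l u : EReal) + g u := by
    intro u
    rw [fbe_eq_iInf l l' g hγ u]
    refine iInf_le_of_le u ?_
    rw [qaux_self]
  have h2 : ∀ u w : E, ((c * ‖w - u‖ ^ 2 : ℝ) : EReal) + ((l w : EReal) + g w)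
      ≤ ((qaux l l' γ u w : ℝ) : EReal) + g w := by
    intro u w
    calc ((c * ‖w - u‖ ^ 2 : ℝ) : EReal) + ((l w : EReal) + g w)
        = ((l w + c * ‖w - u‖ ^ 2 : ℝ) : EReal) + g w := by rw [EReal.coe_add]; abel
      _ ≤ _ := add_le_add (EReal.coe_le_coe_iff.2 (hql u w)) le_rfl
  ext u
  simp only [Set.mem_setOf_eq]
  constructor
  · intro hu v
    refine (hFle u).trans ?_
    rw [fbe_eq_iInf l l' g hγ v]
    refine le_iInf fun w => ?_
    refine (hu w).trans (le_trans ?_ (h2 v w))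
    have h0 : (0 : EReal) ≤ ((c * ‖w - v‖ ^ 2 : ℝ) : EReal) := by
      rw [show ((0:EReal)) = ((0:ℝ):EReal) from rfl]
      exact EReal.coe_le_coe_iff.2 (mul_nonneg hc.le (sq_nonneg _))
    calc (l w : EReal) + g w = 0 + ((l w : EReal) + g w) := (zero_add _).symm
      _ ≤ _ := add_le_add h0 le_rfl
  · intro hu v
    obtain ⟨m, hm⟩ := hbdd
    obtain ⟨x₀, hx₀⟩ := hproper
    have hqlb : ∀ w : E, l u - γ / 2 * ‖l' u‖ ^ 2 ≤ qaux l l' γ u w := by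
      intro w
      rw [qaux]
      have h1 : -(‖l' u‖ * ‖w - u‖) ≤ ⟪l' u, w - u⟫ := by
        have := abs_real_inner_le_norm (l' u) (w - u)
        cases abs_le.1 this with
        | intro h _ => linarith
      have key : 1 / (2 * γ) * ‖w - u‖ ^ 2 + γ / 2 * ‖l' u‖ ^ 2 - ‖l' u‖ * ‖w - u‖
          = (‖w - u‖ - γ * ‖l' u‖) ^ 2 / (2 * γ) := by field_simp; ring
      have hkey : 0 ≤ 1 / (2 * γ) * ‖w - u‖ ^ 2 + γ / 2 * ‖l' u‖ ^ 2 - ‖l' u‖ * ‖w - u‖ := by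
        rw [key]; positivity
      linarith
    have hlow : ((l u - γ / 2 * ‖l' u‖ ^ 2 + m : ℝ) : EReal) ≤ fbe l l' g γ u := by
      rw [fbe_eq_iInf l l' g hγ u]
      refine le_iInf fun w => ?_
      rw [EReal.coe_add]
      exact add_le_add (EReal.coe_le_coe_iff.2 (hqlb w)) (hm w)
    have hhigh : fbe l l' g γ u < ⊤ := by
      rw [fbe_eq_iInf l l' g hγ u]
      refine lt_of_le_of_lt (iInf_le _ x₀) ?_
      obtain ⟨gx, hgx⟩ : ∃ gx : ℝ, g x₀ = (gx : EReal) :=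
        ⟨(g x₀).toReal, (EReal.coe_toReal hx₀ (hbot x₀)).symm⟩
      rw [hgx, ← EReal.coe_add]
      exact EReal.coe_lt_top _
    obtain ⟨r, hr⟩ : ∃ r : ℝ, fbe l l' g γ u = (r : EReal) := by
      refine ⟨(fbe l l' g γ u).toReal, (EReal.coe_toReal hhigh.ne ?_).symm⟩
      intro hbotEq
      rw [hbotEq] at hlow
      exact (EReal.coe_ne_bot _) (le_bot_iff.1 hlow)
    have hstar : ∀ w : E, ((c * ‖w - u‖ ^ 2 : ℝ) : EReal) + (r : EReal)
        ≤ ((qaux l l' γ u w : ℝ) : EReal) + g w := by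
      intro w
      refine le_trans (add_le_add le_rfl ?_) (h2 u w)
      rw [← hr]
      exact (hu w).trans (hFle w)
    have hclaim : (l u : EReal) + g u ≤ (r : EReal) := by
      by_contra hcon
      push_neg at hcon
      obtain ⟨s, hs1, hs2⟩ := EReal.exists_between_coe_real hcon
      have hsg : ((s - l u : ℝ) : EReal) < g u := by
        by_contra hgle
        push_neg at hgle
        have h3 : (l u : EReal) + g u ≤ ((l u : ℝ) : EReal) + ((s - l u : ℝ) : EReal) :=
          add_le_add le_rfl hgle
        rw [← EReal.coe_add] at h3
        have h4 : ((l u + (s - l u) : ℝ) : EReal) = (s : EReal) := by norm_num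
        rw [h4] at h3
        exact absurd hs2 h3.not_gt
      have hsr : ∀ ε : ℝ, 0 < ε → s ≤ r + 2 * ε := by
        intro ε hε
        have hev1 : ∀ᶠ w in 𝓝 u, ((s - l u : ℝ) : EReal) < g w := hlsc u _ hsg
        have hqc : ContinuousAt (fun w => qaux l l' γ u w) u := by
          have hcont : Continuous fun w : E => qaux l l' γ u w := by
            unfold qaux
            refine (continuous_const.add ?_).add (continuous_const.mul ((continuous_id.sub continuous_const).norm.pow 2))
            exact continuous_const.inner (continuous_id.sub continuous_const)
          exact hcont.continuousAt
        have hev2 : ∀ᶠ w in 𝓝 u, l u - ε < qaux l l' γ u w := by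
          have hlt : l u - ε < qaux l l' γ u u := by rw [qaux_self]; linarith
          exact hqc.eventually (eventually_gt_nhds hlt)
        obtain ⟨δ, hδ, hδP⟩ := Metric.eventually_nhds_iff.1 (hev1.and hev2)
        set ε₂ : ℝ := min (c * δ ^ 2) ε with hε₂def
        have hε₂ : 0 < ε₂ := lt_min (mul_pos hc (pow_pos hδ 2)) hε
        have hltinf : (⨅ w : E, ((qaux l l' γ u w : ℝ) : EReal) + g w) < ((r + ε₂ : ℝ) : EReal) := by
          rw [← fbe_eq_iInf l l' g hγ u, hr]
          exact EReal.coe_lt_coe_iff.2 (by linarith)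
        obtain ⟨w, hw⟩ := iInf_lt_iff.1 hltinf
        have hb1 : ((c * ‖w - u‖ ^ 2 + r : ℝ) : EReal) < ((r + ε₂ : ℝ) : EReal) := by
          rw [EReal.coe_add]
          exact lt_of_le_of_lt (hstar w) hw
        have hb1' : c * ‖w - u‖ ^ 2 + r < r + ε₂ := EReal.coe_lt_coe_iff.1 hb1
        have hdist : dist w u < δ := by
          rw [dist_eq_norm]
          have h3 : ‖w - u‖ ^ 2 < δ ^ 2 := by
            have h5 : c * ‖w - u‖ ^ 2 < c * δ ^ 2 :=
              lt_of_lt_of_le (by linarith) (min_le_left _ _)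
            exact (mul_lt_mul_iff_right₀ hc).1 h5
          exact lt_of_pow_lt_pow_left₀ 2 hδ.le h3
        obtain ⟨hgw, hqw⟩ := hδP hdist
        have h4 : ((s - ε : ℝ) : EReal) ≤ ((qaux l l' γ u w : ℝ) : EReal) + g w := by
          calc ((s - ε : ℝ) : EReal) = ((l u - ε : ℝ) : EReal) + ((s - l u : ℝ) : EReal) := by
                rw [← EReal.coe_add]; norm_num
            _ ≤ _ := add_le_add (EReal.coe_le_coe_iff.2 hqw.le) hgw.le
        have h5 := EReal.coe_lt_coe_iff.1 (lt_of_le_of_lt h4 hw)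
        have h6 : ε₂ ≤ ε := min_le_right _ _
        linarith
      have hsler : s ≤ r := by
        by_contra hsr'
        push_neg at hsr'
        have := hsr ((s - r) / 4) (by linarith)
        linarith
      exact absurd hs1 (not_lt.2 (EReal.coe_le_coe_iff.2 hsler))
    calc (l u : EReal) + g u ≤ (r : EReal) := hclaim
      _ = fbe l l' g γ u := hr.symm
      _ ≤ fbe l l' g γ v := hu v
      _ ≤ (l v : EReal) + g v := hFle v
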